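/- arXiv:2108.06236 — 3 statements merged into one kernel-verified Lean document; each statement's English description precedes it below -/
import Mathlib

section
/- Let p > 3 be prime. An element (x, y) ∈ ℤ/6 × ℤ/(2p^2) satisfies p^2·x^2 + 3·y^2 ≡ 0 (mod 12p^2) if and only if there exists an integer k with (x, y) = (0, 2kp) or (x, y) = (3, (2k+1)p) in ℤ/6 × ℤ/(2p^2). -/
theorem stmt_2 (p : ℕ) (hp : p.Prime) (hp3 : 3 < p)
    (z : ZMod 6 × ZMod (2 * p ^ 2)) :
    ((p : ℤ) ^ 2 * (z.1.val : ℤ) ^ 2 + 3 * (z.2.val : ℤ) ^ 2 ≡ 0 [ZMOD (12 * (p : ℤ) ^ 2)]) ↔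
      ∃ k : ℤ, (z.1 = 0 ∧ z.2 = 2 * (k : ZMod (2 * p ^ 2)) * (p : ZMod (2 * p ^ 2))) ∨
        (z.1 = 3 ∧ z.2 = (2 * (k : ZMod (2 * p ^ 2)) + 1) * (p : ZMod (2 * p ^ 2))) := by
  haveI : NeZero (2 * p ^ 2) := ⟨by positivity⟩
  have hp0 : (0:ℤ) < (p:ℤ) := by exact_mod_cast hp.pos
  have hp3' : (3:ℤ) < (p:ℤ) := by exact_mod_cast hp3
  have hppZ : Prime (p:ℤ) := Nat.prime_iff_prime_int.mp hp
  have hz2 : z.2 = (((z.2.val : ℤ)) : ZMod (2 * p ^ 2)) := by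
    push_cast
    rw [ZMod.natCast_val, ZMod.cast_id]
  have hz1 : z.1 = (((z.1.val : ℤ)) : ZMod 6) := by
    push_cast
    rw [ZMod.natCast_val, ZMod.cast_id]
  have hnz : ((2 * p ^ 2 : ℕ) : ℤ) = 2 * (p:ℤ)^2 := by push_cast; ring
  constructor
  · intro h
    have hdvd : (12 * (p:ℤ)^2) ∣ ((p:ℤ)^2 * (z.1.val:ℤ)^2 + 3 * (z.2.val:ℤ)^2) :=
      (Int.modEq_zero_iff_dvd).mp h
    have hpy : (p:ℤ) ∣ (z.2.val:ℤ) := by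
      have h2 : (p:ℤ) ∣ ((p:ℤ)^2 * (z.1.val:ℤ)^2 + 3 * (z.2.val:ℤ)^2) :=
        dvd_trans ⟨12 * (p:ℤ), by ring⟩ hdvd
      have h3 : (p:ℤ) ∣ (p:ℤ)^2 * (z.1.val:ℤ)^2 := ⟨(p:ℤ) * (z.1.val:ℤ)^2, by ring⟩
      have h1 : (p:ℤ) ∣ 3 * (z.2.val:ℤ)^2 := by
        have := dvd_sub h2 h3
        simpa using this
      rcases hppZ.dvd_mul.mp h1 with h4 | h4
      · exfalso
        have := Int.le_of_dvd (by norm_num) h4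
        omega
      · exact hppZ.dvd_of_dvd_pow h4
    obtain ⟨m, hm⟩ := hpy
    have h12 : (12:ℤ) ∣ ((z.1.val:ℤ)^2 + 3*m^2) := by
      obtain ⟨c, hc⟩ := hdvd
      rw [hm] at hc
      refine ⟨c, mul_left_cancel₀ (a := (p:ℤ)^2) (by positivity) ?_⟩
      linear_combination hc
    obtain ⟨a, ha⟩ : ∃ a, z.1.val = a := ⟨_, rfl⟩
    have ha6 : a < 6 := ha ▸ ZMod.val_lt z.1
    rw [ha] at h12 hz1
    interval_cases a
    · -- a = 0
      rcases Int.even_or_odd' m with ⟨t, ht | ht⟩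
      · refine ⟨t, Or.inl ⟨by rw [hz1]; norm_num, ?_⟩⟩
        rw [hz2, hm, ht]
        push_cast
        ring
      · exfalso
        obtain ⟨c, hc⟩ := h12
        obtain ⟨s, hs⟩ : ∃ s : ℤ, 3 + 12*s = 12*c := ⟨t^2+t, by rw [ht] at hc; linear_combination hc⟩
        omega
    · exfalso
      obtain ⟨c, hc⟩ := h12
      obtain ⟨s, hs⟩ : ∃ s : ℤ, 1 + 3*s = 12*c := ⟨m^2, by linear_combination hc⟩
      omega
    · exfalso
      obtain ⟨c, hc⟩ := h12
      obtain ⟨s, hs⟩ : ∃ s : ℤ, 4 + 3*s = 12*c := ⟨m^2, by linear_combination hc⟩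
      omega
    · -- a = 3
      rcases Int.even_or_odd' m with ⟨t, ht | ht⟩
      · exfalso
        obtain ⟨c, hc⟩ := h12
        obtain ⟨s, hs⟩ : ∃ s : ℤ, 9 + 12*s = 12*c := ⟨t^2, by rw [ht] at hc; linear_combination hc⟩
        omega
      · refine ⟨t, Or.inr ⟨by rw [hz1]; norm_num, ?_⟩⟩
        rw [hz2, hm, ht]
        push_cast
        ring
    · exfalso
      obtain ⟨c, hc⟩ := h12
      obtain ⟨s, hs⟩ : ∃ s : ℤ, 16 + 3*s = 12*c := ⟨m^2, by linear_combination hc⟩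
      omega
    · exfalso
      obtain ⟨c, hc⟩ := h12
      obtain ⟨s, hs⟩ : ∃ s : ℤ, 25 + 3*s = 12*c := ⟨m^2, by linear_combination hc⟩
      omega
  · rintro ⟨k, ⟨h1, h2⟩ | ⟨h1, h2⟩⟩
    · have hv1 : z.1.val = 0 := by rw [h1]; rfl
      have heq : ((z.2.val:ℤ) : ZMod (2*p^2)) = ((2*k*(p:ℤ) : ℤ) : ZMod (2*p^2)) := by
        rw [← hz2, h2]; push_cast; ring
      have hdv : ((2*p^2 : ℕ):ℤ) ∣ (2*k*(p:ℤ) - (z.2.val:ℤ)) :=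
        ((ZMod.intCast_eq_intCast_iff _ _ _).mp heq).dvd
      rw [hnz] at hdv
      obtain ⟨t, ht⟩ := hdv
      have hy : (z.2.val:ℤ) = 2*k*(p:ℤ) - 2*(p:ℤ)^2*t := by linarith
      refine (Int.modEq_zero_iff_dvd).mpr ⟨(k - (p:ℤ)*t)^2, ?_⟩
      rw [hv1, hy]
      push_cast
      ring
    · have hv1 : z.1.val = 3 := by rw [h1]; rfl
      have heq : ((z.2.val:ℤ) : ZMod (2*p^2)) = (((2*k+1)*(p:ℤ) : ℤ) : ZMod (2*p^2)) := by
        rw [← hz2, h2]; push_cast; ring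
      have hdv : ((2*p^2 : ℕ):ℤ) ∣ ((2*k+1)*(p:ℤ) - (z.2.val:ℤ)) :=
        ((ZMod.intCast_eq_intCast_iff _ _ _).mp heq).dvd
      rw [hnz] at hdv
      obtain ⟨t, ht⟩ := hdv
      have hy : (z.2.val:ℤ) = (2*k+1)*(p:ℤ) - 2*(p:ℤ)^2*t := by linarith
      refine (Int.modEq_zero_iff_dvd).mpr
        ⟨1 + k + k^2 - (2*k+1)*(p:ℤ)*t + (p:ℤ)^2*t^2, ?_⟩
      rw [hv1, hy]
      push_cast
      ring
end

section
/- Let p > 3 be prime. The number of isotropic elements of the discriminant group D(L_{2p^2}) ≅ ℤ/6 × ℤ/(2p^2) (with quadratic form q(x,y) = -x^2/6 - y^2/(2p^2) mod 2ℤ) is exactly 2p: namely p elements of the form (0, 2kp) for k = 0, …, p-1 and p elements of the form (3, (2k+1)p) for k = 0, …, p-1. -/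
theorem stmt_4 (p : ℕ) (hp : p.Prime) (hp3 : 3 < p) :
    {z : ZMod 6 × ZMod (2 * p ^ 2) |
        (p : ℤ) ^ 2 * (z.1.val : ℤ) ^ 2 + 3 * (z.2.val : ℤ) ^ 2 ≡ 0 [ZMOD (12 * (p : ℤ) ^ 2)]} =
      (fun k : ℕ => ((0 : ZMod 6), ((2 * k * p : ℕ) : ZMod (2 * p ^ 2)))) '' (Set.Iio p) ∪
      (fun k : ℕ => ((3 : ZMod 6), (((2 * k + 1) * p : ℕ) : ZMod (2 * p ^ 2)))) '' (Set.Iio p) ∧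
    {z : ZMod 6 × ZMod (2 * p ^ 2) |
        (p : ℤ) ^ 2 * (z.1.val : ℤ) ^ 2 + 3 * (z.2.val : ℤ) ^ 2 ≡ 0
          [ZMOD (12 * (p : ℤ) ^ 2)]}.ncard = 2 * p := by
  haveI : NeZero (2 * p ^ 2) := ⟨by positivity⟩
  have hp0 : 0 < p := by omega
  have hpodd : p % 2 = 1 := Nat.odd_iff.mp (hp.odd_of_ne_two (by omega))
  have hlt1 : ∀ k : ℕ, k < p → 2 * k * p < 2 * p ^ 2 := by
    intro k hk
    have : 2 * k * p < 2 * p * p := by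
      apply Nat.mul_lt_mul_of_lt_of_le (by omega) le_rfl (by omega)
    calc 2 * k * p < 2 * p * p := this
      _ = 2 * p ^ 2 := by ring
  have hlt2 : ∀ k : ℕ, k < p → (2 * k + 1) * p < 2 * p ^ 2 := by
    intro k hk
    have : (2 * k + 1) * p < (2 * p) * p := by
      apply Nat.mul_lt_mul_of_lt_of_le (by omega) le_rfl (by omega)
    calc (2 * k + 1) * p < 2 * p * p := this
      _ = 2 * p ^ 2 := by ring
  have key : {z : ZMod 6 × ZMod (2 * p ^ 2) |
        (p : ℤ) ^ 2 * (z.1.val : ℤ) ^ 2 + 3 * (z.2.val : ℤ) ^ 2 ≡ 0 [ZMOD (12 * (p : ℤ) ^ 2)]} =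
      (fun k : ℕ => ((0 : ZMod 6), ((2 * k * p : ℕ) : ZMod (2 * p ^ 2)))) '' (Set.Iio p) ∪
      (fun k : ℕ => ((3 : ZMod 6), (((2 * k + 1) * p : ℕ) : ZMod (2 * p ^ 2)))) '' (Set.Iio p) := by
    ext z
    simp only [Set.mem_setOf_eq, Set.mem_union, Set.mem_image, Set.mem_Iio]
    constructor
    · intro h
      have hdvd : (12 * (p:ℤ)^2) ∣ (p:ℤ)^2 * (z.1.val : ℤ)^2 + 3 * (z.2.val : ℤ)^2 := by
        have := (Int.modEq_zero_iff_dvd).mp h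
        exact this
      set a := z.1.val with ha
      set b := z.2.val with hb
      have hn : 12 * p^2 ∣ p^2 * a^2 + 3 * b^2 := by exact_mod_cast hdvd
      have ha6 : a < 6 := ZMod.val_lt z.1
      have hb6 : b < 2 * p^2 := ZMod.val_lt z.2
      -- 3 ∣ a
      have h3s : 3 ∣ p^2 * a^2 + 3 * b^2 := dvd_trans ⟨4 * p^2, by ring⟩ hn
      have h3a2 : 3 ∣ p^2 * a^2 := (Nat.dvd_add_iff_left (Dvd.intro _ rfl)).mpr h3s
      have h3a : 3 ∣ a := by
        rcases (Nat.Prime.dvd_mul Nat.prime_three).mp h3a2 with h | h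
        · exfalso
          have := Nat.Prime.dvd_of_dvd_pow (p := 3) Nat.prime_three h
          have := (Nat.prime_dvd_prime_iff_eq Nat.prime_three hp).mp this
          omega
        · exact Nat.Prime.dvd_of_dvd_pow Nat.prime_three h
      -- p ∣ b
      have hps : p^2 ∣ 3 * b^2 := by
        have h1 : p^2 ∣ p^2 * a^2 + 3 * b^2 := dvd_trans ⟨12, by ring⟩ hn
        exact (Nat.dvd_add_iff_right (Dvd.intro _ rfl)).mpr h1
      have hpb : p ∣ b := by
        have h1 : p ∣ 3 * b^2 := dvd_trans (dvd_pow_self p (by norm_num)) hps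
        rcases (hp.dvd_mul).mp h1 with h | h
        · exfalso; have := Nat.le_of_dvd (by norm_num) h; omega
        · exact hp.dvd_of_dvd_pow h
      obtain ⟨m, hm⟩ := hpb
      have hmlt : m < 2 * p := by
        by_contra hc
        push_neg at hc
        have : 2 * p^2 ≤ b := by
          calc 2 * p ^ 2 = p * (2 * p) := by ring
            _ ≤ p * m := Nat.mul_le_mul_left p hc
            _ = b := hm.symm
        omega
      have hpsq : p^2 % 2 = 1 := by
        have h := Nat.pow_mod p 2 2
        rw [hpodd] at h
        norm_num at h
        exact h
      have h2s : 2 ∣ p^2 * a^2 + 3 * b^2 := dvd_trans ⟨6 * p^2, by ring⟩ hn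
      -- a = 0 or a = 3
      have : a = 0 ∨ a = 3 := by omega
      rcases this with ha0 | ha3
      · -- even case: b even
        left
        have hbeven : b % 2 = 0 := by
          rcases Nat.even_or_odd b with he | ho
          · exact Nat.even_iff.mp he
          · exfalso
            have hb2 : b^2 % 2 = 1 := by
              have hb1 : b % 2 = 1 := Nat.odd_iff.mp ho
              have h1 := Nat.pow_mod b 2 2
              rw [hb1] at h1
              norm_num at h1
              exact h1
            obtain ⟨c, hc⟩ := h2s
            rw [ha0] at hc
            norm_num at hc
            omega
        have hmeven : m % 2 = 0 := by
          have hbm : b % 2 = m % 2 := by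
            rw [hm, Nat.mul_mod, hpodd]
            omega
          omega
        obtain ⟨k, hk⟩ : ∃ k, m = 2 * k := ⟨m / 2, by omega⟩
        refine ⟨k, by omega, ?_⟩
        have hbval : b = 2 * k * p := by rw [hm, hk]; ring
        have hz1 : (0 : ZMod 6) = z.1 := by
          symm
          have : ((a : ℕ) : ZMod 6) = z.1 := ZMod.natCast_rightInverse z.1
          rw [← this, ha0]; simp
        have hz2 : ((2 * k * p : ℕ) : ZMod (2 * p ^ 2)) = z.2 := by
          rw [← hbval]
          exact ZMod.natCast_rightInverse z.2
        exact Prod.ext hz1 hz2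
      · -- odd case
        right
        have hbodd : b % 2 = 1 := by
          rcases Nat.even_or_odd b with he | ho
          · exfalso
            have hb2 : b^2 % 2 = 0 := by
              have hb1 : b % 2 = 0 := Nat.even_iff.mp he
              have h1 := Nat.pow_mod b 2 2
              rw [hb1] at h1
              norm_num at h1
              exact h1
            obtain ⟨c, hc⟩ := h2s
            rw [ha3] at hc
            norm_num at hc
            omega
          · exact Nat.odd_iff.mp ho
        have hmodd : m % 2 = 1 := by
          have hbm : b % 2 = m % 2 := by
            rw [hm, Nat.mul_mod, hpodd]
            omega
          omega
        obtain ⟨k, hk⟩ : ∃ k, m = 2 * k + 1 := ⟨m / 2, by omega⟩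
        refine ⟨k, by omega, ?_⟩
        have hbval : b = (2 * k + 1) * p := by rw [hm, hk]; ring
        have hz1 : (3 : ZMod 6) = z.1 := by
          have : ((a : ℕ) : ZMod 6) = z.1 := ZMod.natCast_rightInverse z.1
          rw [← this, ha3]; norm_num
        have hz2 : (((2 * k + 1) * p : ℕ) : ZMod (2 * p ^ 2)) = z.2 := by
          rw [← hbval]
          exact ZMod.natCast_rightInverse z.2
        exact Prod.ext hz1 hz2
    · rintro (⟨k, hk, rfl⟩ | ⟨k, hk, rfl⟩)
      · have hval : ((2 * k * p : ℕ) : ZMod (2 * p ^ 2)).val = 2 * k * p := by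
          rw [ZMod.val_natCast, Nat.mod_eq_of_lt (hlt1 k hk)]
        show (p : ℤ) ^ 2 * (((0 : ZMod 6)).val : ℤ) ^ 2 + 3 * _ ≡ 0 [ZMOD _]
        rw [Int.modEq_zero_iff_dvd]
        simp only [ZMod.val_zero, hval]
        exact ⟨(k : ℤ)^2, by push_cast; ring⟩
      · have hval : (((2 * k + 1) * p : ℕ) : ZMod (2 * p ^ 2)).val = (2 * k + 1) * p := by
          rw [ZMod.val_natCast, Nat.mod_eq_of_lt (hlt2 k hk)]
        show (p : ℤ) ^ 2 * (((3 : ZMod 6)).val : ℤ) ^ 2 + 3 * _ ≡ 0 [ZMOD _]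
        rw [Int.modEq_zero_iff_dvd]
        have h3v : ((3 : ZMod 6)).val = 3 := rfl
        rw [h3v, hval]
        exact ⟨(k : ℤ)^2 + k + 1, by push_cast; ring⟩
  refine ⟨key, ?_⟩
  rw [key]
  have hfin : (Set.Iio p).Finite := Set.finite_Iio p
  have hinj1 : Set.InjOn (fun k : ℕ => ((0 : ZMod 6), ((2 * k * p : ℕ) : ZMod (2 * p ^ 2)))) (Set.Iio p) := by
    intro x hx y hy hxy
    simp only [Set.mem_Iio] at hx hy
    have h2 := congrArg Prod.snd hxy
    simp only at h2
    have := congrArg ZMod.val h2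
    rw [ZMod.val_natCast, ZMod.val_natCast, Nat.mod_eq_of_lt (hlt1 x hx),
      Nat.mod_eq_of_lt (hlt1 y hy)] at this
    have h := Nat.eq_of_mul_eq_mul_right hp0 this
    omega
  have hinj2 : Set.InjOn (fun k : ℕ => ((3 : ZMod 6), (((2 * k + 1) * p : ℕ) : ZMod (2 * p ^ 2)))) (Set.Iio p) := by
    intro x hx y hy hxy
    simp only [Set.mem_Iio] at hx hy
    have h2 := congrArg Prod.snd hxy
    simp only at h2
    have := congrArg ZMod.val h2
    rw [ZMod.val_natCast, ZMod.val_natCast, Nat.mod_eq_of_lt (hlt2 x hx),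
      Nat.mod_eq_of_lt (hlt2 y hy)] at this
    have hxy' : (2 * x + 1) * p = (2 * y + 1) * p := this
    have := Nat.eq_of_mul_eq_mul_right hp0 hxy'
    omega
  have hdisj : Disjoint
      ((fun k : ℕ => ((0 : ZMod 6), ((2 * k * p : ℕ) : ZMod (2 * p ^ 2)))) '' (Set.Iio p))
      ((fun k : ℕ => ((3 : ZMod 6), (((2 * k + 1) * p : ℕ) : ZMod (2 * p ^ 2)))) '' (Set.Iio p)) := by
    rw [Set.disjoint_left]
    rintro z ⟨k, hk, rfl⟩ ⟨k', hk', hz⟩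
    have := congrArg Prod.fst hz
    simp only at this
    exact absurd this (by decide)
  rw [Set.ncard_union_eq hdisj (hfin.image _) (hfin.image _),
    Set.ncard_image_of_injOn hinj1, Set.ncard_image_of_injOn hinj2]
  have : (Set.Iio p).ncard = p := by
    rw [← Finset.coe_Iio, Set.ncard_coe_finset, Nat.card_Iio]
  omega
end

section
/- Let L = 2U ⊕ ⟨-2p²⟩ ⊕ ⟨-6⟩ for p > 3 prime, with basis e₁,f₁,e₂,f₂ (canonical hyperbolic bases) and generators v of ⟨-2p²⟩, w of ⟨-6⟩. Then the vector u = 2p·e₁ + 2p·v₃·e₂ + 2p·v₄·f₂ + p·w + (2k+1)·v, with gcd(2k+1, p) = 1, is primitive in L and has divisor div(u) = 2p (the ideal (u, L) is generated by 2p). -/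
open Matrix

/-- The Gram matrix of `L_{2p²} = 2U ⊕ ⟨-6⟩ ⊕ ⟨-2p²⟩` on the ordered basis
`e₁, f₁, e₂, f₂, w, v` where `w² = -6` and `v² = -2p²`. -/
def gramL (p : ℕ) : Matrix (Fin 6) (Fin 6) ℤ :=
  !![0, 1, 0, 0, 0, 0;
     1, 0, 0, 0, 0, 0;
     0, 0, 0, 1, 0, 0;
     0, 0, 1, 0, 0, 0;
     0, 0, 0, 0, -6, 0;
     0, 0, 0, 0, 0, -2 * (p : ℤ) ^ 2]

lemma v6 {α : Type*} (a b c d e f : α) :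
    ![a,b,c,d,e,f] 0 = a ∧ ![a,b,c,d,e,f] 1 = b ∧ ![a,b,c,d,e,f] 2 = c ∧
    ![a,b,c,d,e,f] 3 = d ∧ ![a,b,c,d,e,f] 4 = e ∧ ![a,b,c,d,e,f] 5 = f :=
  ⟨rfl, rfl, rfl, rfl, rfl, rfl⟩

theorem stmt_18 (p : ℕ) (hp : p.Prime) (hp3 : 3 < p) (k v₃ v₄ : ℤ)
    (hk : IsCoprime (2 * k + 1) (p : ℤ)) :
    -- the vector u = 2p·e₁ + 2p·v₃·e₂ + 2p·v₄·f₂ + p·w + (2k+1)·v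
    (∀ c : ℤ, (∀ i : Fin 6,
        c ∣ ![2 * (p : ℤ), 0, 2 * (p : ℤ) * v₃, 2 * (p : ℤ) * v₄, (p : ℤ), 2 * k + 1] i) →
        IsUnit c) ∧
    (∀ x : Fin 6 → ℤ,
        (2 * (p : ℤ)) ∣
          ![2 * (p : ℤ), 0, 2 * (p : ℤ) * v₃, 2 * (p : ℤ) * v₄, (p : ℤ), 2 * k + 1] ⬝ᵥ
            (gramL p).mulVec x) ∧
    (∃ x : Fin 6 → ℤ,
        ![2 * (p : ℤ), 0, 2 * (p : ℤ) * v₃, 2 * (p : ℤ) * v₄, (p : ℤ), 2 * k + 1] ⬝ᵥ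
          (gramL p).mulVec x = 2 * (p : ℤ)) := by
  refine ⟨?_, ?_, ⟨![0, 1, 0, 0, 0, 0], ?_⟩⟩
  · intro c hc
    obtain ⟨a, b, hab⟩ := hk
    have h1 : c ∣ 2 * k + 1 := hc 5
    have h2 : c ∣ (p : ℤ) := hc 4
    have : c ∣ 1 := hab ▸ dvd_add (Dvd.dvd.mul_left h1 a) (Dvd.dvd.mul_left h2 b)
    exact isUnit_of_dvd_one this
  · intro x
    simp only [gramL, mulVec, dotProduct, Fin.sum_univ_six, Matrix.of_apply, Matrix.cons_val',
      (v6 _ _ _ _ _ _).1, (v6 _ _ _ _ _ _).2.1, (v6 _ _ _ _ _ _).2.2.1,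
      (v6 _ _ _ _ _ _).2.2.2.1, (v6 _ _ _ _ _ _).2.2.2.2.1, (v6 _ _ _ _ _ _).2.2.2.2.2,
      Matrix.cons_val_zero, Matrix.cons_val_one, Matrix.head_cons, Matrix.empty_val']
    exact ⟨x 1 + v₃ * x 3 + v₄ * x 2 - 3 * x 4 - (2 * k + 1) * (p : ℤ) * x 5, by ring⟩
  · simp only [gramL, mulVec, dotProduct, Fin.sum_univ_six, Matrix.of_apply, Matrix.cons_val',
      (v6 _ _ _ _ _ _).1, (v6 _ _ _ _ _ _).2.1, (v6 _ _ _ _ _ _).2.2.1,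
      (v6 _ _ _ _ _ _).2.2.2.1, (v6 _ _ _ _ _ _).2.2.2.2.1, (v6 _ _ _ _ _ _).2.2.2.2.2,
      Matrix.cons_val_zero, Matrix.cons_val_one, Matrix.head_cons, Matrix.empty_val']
    ring
end
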